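/- There is a constant C > 0 such that: for every prime p and every polynomial f of degree at most d over ℤ/pℤ, if the number of representations function F(x) = #{t ∈ ℤ/pℤ : f(t) = x} satisfies |F̂(r)| ≤ Cp^{1−2^{−d}} for all r ≠ 0 (where F̂(r) = Σ_x F(x)e_p(−rx)), then f attains a value in the interval {−2k,…,2k} ⊂ ℤ/pℤ whenever 2k+1 > Cp^{1−2^{−d}}. Consequently, assuming Weyl's inequality, every polynomial of degree at most d over ℤ/pℤ with some nonconstant coefficient nonzero attains a value of the form π_p(m) with |m| ≤ C_d·p^{1−2^{−d}} for an absolute constant C_d. -/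

import Mathlib

open Finset Polynomial

noncomputable def Ee (p : ℕ) (z : ZMod p) : ℂ :=
  Complex.exp (2 * Real.pi * Complex.I * z.val / p)




lemma Ee_intCast (p : ℕ) [NeZero p] (n : ℤ) :
    Ee p ((n : ZMod p)) = Complex.exp (2 * Real.pi * Complex.I * n / p) := by
  have hp0 : (p : ℂ) ≠ 0 := by
    exact_mod_cast Nat.cast_ne_zero.mpr (NeZero.ne p)
  set v : ℕ := ((n : ZMod p)).val with hv
  have hdvd : (p : ℤ) ∣ n - v := by
    have : ((n - v : ℤ) : ZMod p) = 0 := by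
      push_cast
      simp [hv, ZMod.natCast_val, ZMod.intCast_cast]
    exact (ZMod.intCast_zmod_eq_zero_iff_dvd _ p).mp this
  obtain ⟨q, hq⟩ := hdvd
  have hn : (n : ℂ) = v + p * q := by
    have : (n : ℤ) = v + p * q := by linarith [hq]
    exact_mod_cast congrArg (Int.cast : ℤ → ℂ) this
  rw [Ee, hn]
  rw [show 2 * (Real.pi:ℂ) * Complex.I * ((v:ℂ) + p * q) / p
      = 2 * Real.pi * Complex.I * v / p + q * (2 * Real.pi * Complex.I) by
    field_simp]
  rw [Complex.exp_add, Complex.exp_int_mul_two_pi_mul_I]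
  ring

lemma Ee_cast_surj (p : ℕ) [NeZero p] (x : ZMod p) : ∃ n : ℤ, (n : ZMod p) = x :=
  ⟨(x.val : ℤ), by simp [ZMod.natCast_val, ZMod.intCast_cast]⟩

lemma Ee_add (p : ℕ) [NeZero p] (x y : ZMod p) : Ee p (x + y) = Ee p x * Ee p y := by
  obtain ⟨m, rfl⟩ := Ee_cast_surj p x
  obtain ⟨n, rfl⟩ := Ee_cast_surj p y
  rw [show ((m : ZMod p) + n) = ((m + n : ℤ) : ZMod p) by push_cast; ring]
  rw [Ee_intCast, Ee_intCast, Ee_intCast, ← Complex.exp_add]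
  congr 1
  push_cast
  ring

lemma Ee_zero (p : ℕ) : Ee p 0 = 1 := by
  simp [Ee]

lemma Ee_abs (p : ℕ) (x : ZMod p) : ‖Ee p x‖ = 1 := by
  rw [Ee, Complex.norm_exp]
  have : (2 * (Real.pi:ℂ) * Complex.I * (x.val:ℂ) / p).re = 0 := by
    rw [show 2 * (Real.pi:ℂ) * Complex.I * (x.val:ℂ) / p
        = (2 * Real.pi * (x.val:ℝ) / p : ℝ) * Complex.I by push_cast; ring]
    simp
  rw [this, Real.exp_zero]

lemma Ee_conj (p : ℕ) [NeZero p] (x : ZMod p) :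
    (starRingEnd ℂ) (Ee p x) = Ee p (-x) := by
  have h1 : Ee p x * Ee p (-x) = 1 := by
    rw [← Ee_add, add_neg_cancel, Ee_zero]
  have h2 : Ee p x * (starRingEnd ℂ) (Ee p x) = 1 := by
    rw [Complex.mul_conj]
    norm_cast
    rw [← Complex.sq_norm, Ee_abs]
    norm_num
  have hne : Ee p x ≠ 0 := by
    intro h; rw [h, zero_mul] at h1; exact one_ne_zero h1.symm
  skip
  rw [← h1] at h2
  exact mul_left_cancel₀ hne h2

section
variable (p : ℕ) [NeZero p]

lemma Eexp_ne_one (a : ZMod p) (ha : a ≠ 0) :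
    Complex.exp (2 * Real.pi * Complex.I * a.val / p) ≠ 1 := by
  intro h
  rw [Complex.exp_eq_one_iff] at h
  obtain ⟨n, hn⟩ := h
  have hI : (2 * (Real.pi:ℂ) * Complex.I) ≠ 0 := by
    simp [Real.pi_ne_zero, Complex.I_ne_zero, Complex.ofReal_ne_zero]
  have hp0 : (p : ℂ) ≠ 0 := Nat.cast_ne_zero.mpr (NeZero.ne p)
  have key : ((a.val : ℂ) / p) * (2 * Real.pi * Complex.I)
      = (n : ℂ) * (2 * Real.pi * Complex.I) := by
    rw [← hn]; ring
  have hc : (a.val : ℂ) / p = n := mul_right_cancel₀ hI key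
  have hc2 : (a.val : ℂ) = n * p := by
    rw [ZMod.natCast_val]
    field_simp at hc
    rw [ZMod.natCast_val] at hc
    linear_combination hc
  have hz : (a.val : ℤ) = n * p := by exact_mod_cast hc2
  have hvpos : 0 < a.val := by
    rcases Nat.eq_zero_or_pos a.val with h0 | h0
    · exact absurd ((ZMod.val_eq_zero a).mp h0) ha
    · exact h0
  have hvlt : a.val < p := ZMod.val_lt a
  have hppos : 0 < p := Nat.pos_of_ne_zero (NeZero.ne p)
  rcases le_or_gt n 0 with h | h
  · nlinarith [hz, Int.mul_le_mul_of_nonneg_right h (by positivity : (0:ℤ) ≤ (p:ℤ))]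
  · have : 1 ≤ n := h
    nlinarith [hz]

end




section
variable (p : ℕ) [NeZero p]

lemma Ee_sum_eq_zero (a : ZMod p) (ha : a ≠ 0) :
    ∑ x : ZMod p, Ee p (a * x) = 0 := by
  have key : Ee p a * ∑ x : ZMod p, Ee p (a * x) = ∑ x : ZMod p, Ee p (a * x) := by
    rw [Finset.mul_sum]
    have : ∀ x : ZMod p, Ee p a * Ee p (a * x) = Ee p (a * (x + 1)) := by
      intro x
      rw [mul_add, mul_one, add_comm, Ee_add]
    simp_rw [this]
    exact Fintype.sum_equiv (Equiv.addRight 1) _ _ (fun x => rfl)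
  have hne : Ee p a - 1 ≠ 0 := by
    intro h
    exact Eexp_ne_one p a ha (by rw [← sub_eq_zero]; exact h)
  have : (Ee p a - 1) * ∑ x : ZMod p, Ee p (a * x) = 0 := by
    rw [sub_mul, one_mul, key, sub_self]
  rcases mul_eq_zero.mp this with h | h
  · exact absurd h hne
  · exact h

lemma Ee_orth (z : ZMod p) :
    ∑ a : ZMod p, Ee p (a * z) = if z = 0 then (p : ℂ) else 0 := by
  rcases eq_or_ne z 0 with rfl | hz
  · simp [Ee_zero, ZMod.card]
  · rw [if_neg hz]
    have : ∀ a : ZMod p, Ee p (a * z) = Ee p (z * a) := fun a => by rw [mul_comm]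
    simp_rw [this]
    exact Ee_sum_eq_zero p z hz

lemma sum_range_eq_sum_zmod (g : ZMod p → ℂ) :
    ∑ i ∈ Finset.range p, g (i : ZMod p) = ∑ x : ZMod p, g x := by
  refine Finset.sum_nbij' (fun i => (i : ZMod p)) (fun x => x.val) ?_ ?_ ?_ ?_ ?_
  · intro i _; exact Finset.mem_univ _
  · intro x _; exact Finset.mem_range.mpr (ZMod.val_lt x)
  · intro i hi; exact ZMod.val_cast_of_lt (Finset.mem_range.mp hi)
  · intro x _; exact ZMod.natCast_rightInverse x
  · intro i _; rfl
end


lemma diff_poly_natDegree (p : ℕ) [Fact p.Prime] (h : Polynomial (ZMod p))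
    (he : 1 ≤ h.natDegree) (hep : h.natDegree < p) (u : ZMod p) (hu : u ≠ 0) :
    ((taylor u h) - h).natDegree = h.natDegree - 1 := by
  set e := h.natDegree with hedef
  have hcoeff_ge : ∀ j, e ≤ j → ((taylor u h) - h).coeff j = 0 := by
    intro j hj
    have hhd : hasseDeriv j h = C (h.coeff j) := by
      ext k
      rw [hasseDeriv_coeff, coeff_C]
      rcases Nat.eq_zero_or_pos k with rfl | hk
      · simp
      · rw [if_neg (Nat.pos_iff_ne_zero.mp hk)]
        have : h.natDegree < k + j := by omega
        rw [coeff_eq_zero_of_natDegree_lt this, mul_zero]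
    rw [coeff_sub, taylor_coeff, hhd, eval_C, sub_self]
  have hhd1 : hasseDeriv (e-1) h = C (h.coeff (e-1)) + C ((e : ZMod p) * h.coeff e) * X := by
    ext k
    rw [hasseDeriv_coeff, coeff_add, coeff_C, coeff_C_mul, coeff_X]
    match k with
    | 0 => simp [Nat.choose_self]
    | 1 =>
      have h1 : 1 + (e - 1) = e := by omega
      have h2 : e.choose (e-1) = e := by
        have h3 := Nat.choose_symm (show 1 ≤ e by omega)
        rw [h3, Nat.choose_one_right]
      rw [h1]
      simp only [if_neg (by norm_num : ¬ (1:ℕ) = 0), if_pos rfl, h2]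
      push_cast
      ring
    | (k+2) =>
      have : h.natDegree < (k+2) + (e-1) := by omega
      rw [coeff_eq_zero_of_natDegree_lt this, mul_zero]
      simp
  have hkey : ((taylor u h) - h).coeff (e-1) = (e : ZMod p) * h.coeff e * u := by
    rw [coeff_sub, taylor_coeff, hhd1]
    simp [mul_comm]
  have hne : ((taylor u h) - h).coeff (e-1) ≠ 0 := by
    rw [hkey]
    have h1 : (e : ZMod p) ≠ 0 := by
      rw [Ne, ZMod.natCast_eq_zero_iff]
      intro hdvd
      have := Nat.le_of_dvd (by omega) hdvd
      omega
    have hne0 : h ≠ 0 := Polynomial.ne_zero_of_natDegree_gt (show 0 < h.natDegree by omega)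
    have h2 : h.coeff e ≠ 0 := by
      have := Polynomial.leadingCoeff_ne_zero.mpr hne0
      rwa [Polynomial.leadingCoeff] at this
    exact mul_ne_zero (mul_ne_zero h1 h2) hu
  apply le_antisymm
  · rw [Polynomial.natDegree_le_iff_coeff_eq_zero]
    intro m hm
    exact hcoeff_ge m (by omega)
  · exact Polynomial.le_natDegree_of_ne_zero hne




lemma weyl_sum_sq (p : ℕ) [NeZero p] (h : Polynomial (ZMod p)) :
    (∑ x : ZMod p, Ee p (h.eval x)) * (starRingEnd ℂ) (∑ x : ZMod p, Ee p (h.eval x))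
      = ∑ u : ZMod p, ∑ x : ZMod p, Ee p (((taylor u h) - h).eval x) := by
  set A : ZMod p → ℂ := fun x => Ee p (h.eval x) with hA
  rw [map_sum, Finset.mul_sum]
  have step1 : ∀ x : ZMod p, (∑ y : ZMod p, A y) * (starRingEnd ℂ) (A x)
      = ∑ u : ZMod p, Ee p (((taylor u h) - h).eval x) := by
    intro x
    have h1 : (∑ y : ZMod p, A y) = ∑ u : ZMod p, A (x + u) :=
      (Fintype.sum_equiv (Equiv.addLeft x) (fun u => A (x + u)) A (fun u => rfl)).symm
    rw [h1, Finset.sum_mul]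
    apply Finset.sum_congr rfl
    intro u _
    rw [hA]
    simp only []
    rw [Ee_conj, ← Ee_add]
    congr 1
    rw [eval_sub, taylor_eval]
    ring
  calc ∑ x : ZMod p, (∑ y : ZMod p, A y) * (starRingEnd ℂ) (A x)
      = ∑ x : ZMod p, ∑ u : ZMod p, Ee p (((taylor u h) - h).eval x) := by
        exact Finset.sum_congr rfl (fun x _ => step1 x)
    _ = ∑ u : ZMod p, ∑ x : ZMod p, Ee p (((taylor u h) - h).eval x) := Finset.sum_comm

lemma weyl_bound (p : ℕ) [hp : Fact p.Prime] :
    ∀ e : ℕ, 1 ≤ e → ∀ h : Polynomial (ZMod p), h.natDegree = e → e < p →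
      ‖∑ x : ZMod p, Ee p (h.eval x)‖
        ≤ 2 * (p:ℝ) ^ ((1:ℝ) - 2 ^ (1 - (e:ℝ))) := by
  have hppos : (0:ℝ) < p := by exact_mod_cast hp.out.pos
  have hp1 : (1:ℝ) ≤ p := by exact_mod_cast hp.out.one_lt.le
  intro e he
  induction e, he using Nat.le_induction with
  | base =>
    intro h hdeg hlt
    have hc1 : h.coeff 1 ≠ 0 := by
      have hne0 : h ≠ 0 := Polynomial.ne_zero_of_natDegree_gt (show 0 < h.natDegree by omega)
      have := Polynomial.leadingCoeff_ne_zero.mpr hne0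
      rwa [Polynomial.leadingCoeff, hdeg] at this
    have heval : ∀ x : ZMod p, h.eval x = h.coeff 0 + h.coeff 1 * x := by
      intro x
      rw [Polynomial.eval_eq_sum_range' (show h.natDegree < 2 by omega)]
      simp [Finset.sum_range_succ]
    have hsum : (∑ x : ZMod p, Ee p (h.eval x)) = 0 := by
      have : ∀ x : ZMod p, Ee p (h.eval x) = Ee p (h.coeff 0) * Ee p (h.coeff 1 * x) := by
        intro x; rw [heval, Ee_add]
      simp_rw [this, ← Finset.mul_sum, Ee_sum_eq_zero p _ hc1, mul_zero]
    rw [hsum]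
    simp only [norm_zero]
    positivity
  | succ e he IH =>
    intro h hdeg hlt
    set X := ‖∑ x : ZMod p, Ee p (h.eval x)‖ with hX
    have hX0 : 0 ≤ X := norm_nonneg _
    set α : ℝ := (1:ℝ) - 2 ^ (1 - (e:ℝ)) with hα
    set β : ℝ := (1:ℝ) - 2 ^ (1 - ((e + 1 : ℕ):ℝ)) with hβ
    -- square identity
    have hsq : X ^ 2 = ‖∑ u : ZMod p, ∑ x : ZMod p,
        Ee p (((taylor u h) - h).eval x)‖ := by
      rw [← weyl_sum_sq, norm_mul, Complex.norm_conj, hX]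
      ring
    have hbound : X ^ 2 ≤ (p:ℝ) + ((p:ℝ) - 1) * (2 * (p:ℝ) ^ α) := by
      rw [hsq]
      calc ‖∑ u : ZMod p, ∑ x : ZMod p, Ee p (((taylor u h) - h).eval x)‖
          ≤ ∑ u : ZMod p, ‖∑ x : ZMod p, Ee p (((taylor u h) - h).eval x)‖ :=
            norm_sum_le _ _
        _ ≤ (p:ℝ) + ((p:ℝ) - 1) * (2 * (p:ℝ) ^ α) := by
            rw [← Finset.add_sum_erase Finset.univ _ (Finset.mem_univ (0 : ZMod p))]
            have h0term : ‖∑ x : ZMod p,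
                Ee p (((taylor (0:ZMod p) h) - h).eval x)‖ = p := by
              rw [taylor_zero, sub_self]
              simp [Ee_zero, ZMod.card]
            rw [h0term]
            gcongr
            · have hcard : ((Finset.univ.erase (0 : ZMod p)).card : ℝ) = (p:ℝ) - 1 := by
                rw [Finset.card_erase_of_mem (Finset.mem_univ _), Finset.card_univ, ZMod.card]
                have : 1 ≤ p := hp.out.one_lt.le
                push_cast [Nat.cast_sub this]
                ring
              calc ∑ u ∈ Finset.univ.erase (0 : ZMod p),
                    ‖∑ x : ZMod p, Ee p (((taylor u h) - h).eval x)‖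
                  ≤ (Finset.univ.erase (0 : ZMod p)).card • (2 * (p:ℝ) ^ α) := by
                    apply Finset.sum_le_card_nsmul
                    intro u hu
                    have hu0 : u ≠ 0 := Finset.ne_of_mem_erase hu
                    have hd : ((taylor u h) - h).natDegree = e := by
                      rw [diff_poly_natDegree p h (by omega) (by omega) u hu0, hdeg]
                      omega
                    exact IH _ hd (by omega)
                _ = ((p:ℝ) - 1) * (2 * (p:ℝ) ^ α) := by
                    rw [nsmul_eq_mul, hcard]
    -- arithmetic
    have hα0 : 0 ≤ α := by
      rw [hα, sub_nonneg]
      apply Real.rpow_le_one_of_one_le_of_nonpos (by norm_num)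
      have : (1:ℝ) ≤ (e:ℝ) := by exact_mod_cast he
      linarith
    have h2β : 1 + α = β + β := by
      rw [hα, hβ]
      have : (2:ℝ) ^ (1 - ((e + 1 : ℕ):ℝ)) * 2 = 2 ^ (1 - (e:ℝ)) := by
        have h2 := Real.rpow_add (by norm_num : (0:ℝ) < 2) (1 - ((e + 1 : ℕ):ℝ)) 1
        rw [Real.rpow_one] at h2
        rw [← h2]
        congr 1
        push_cast
        ring
      push_cast at this ⊢
      linarith
    have hpow : (p:ℝ) ^ (1 + α) = ((p:ℝ) ^ β) ^ 2 := by
      rw [h2β, Real.rpow_add hppos, sq]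
    have hple : (p:ℝ) ≤ (p:ℝ) ^ (1 + α) := by
      nth_rewrite 1 [show (p:ℝ) = (p:ℝ) ^ (1:ℝ) by rw [Real.rpow_one]]
      exact Real.rpow_le_rpow_of_exponent_le hp1 (by linarith)
    have hmul : (p:ℝ) ^ (1 + α) = (p:ℝ) * (p:ℝ) ^ α := by
      rw [Real.rpow_add hppos, Real.rpow_one]
    set t : ℝ := (p:ℝ) ^ β with ht
    have ht0 : 0 ≤ t := Real.rpow_nonneg (le_of_lt hppos) _
    have htα : 0 ≤ (p:ℝ) ^ α := Real.rpow_nonneg (le_of_lt hppos) _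
    have hX2 : X ^ 2 ≤ 4 * t ^ 2 := by nlinarith [hbound, hple, hmul, hpow]
    nlinarith [hX2, hX0, ht0]




lemma key_lemma (p : ℕ) [hp : Fact p.Prime] (f : Polynomial (ZMod p)) (M : ℝ) (hM : 0 ≤ M)
    (hF : ∀ a : ZMod p, a ≠ 0 → ‖∑ t : ZMod p, Ee p (a * f.eval t)‖ ≤ M)
    (k : ℕ) (hk : M < 2 * k + 1) :
    ∃ m : ℤ, |m| ≤ 2 * k ∧ ∃ t : ZMod p, f.eval t = (m : ZMod p) := by
  by_cases hpk : p ≤ 2 * k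
  · refine ⟨((f.eval 0).val : ℤ), ?_, 0, ?_⟩
    · rw [abs_of_nonneg (by positivity)]
      have := ZMod.val_lt (f.eval 0)
      exact_mod_cast le_trans (le_of_lt (by exact_mod_cast this)) (by exact_mod_cast hpk)
    · push_cast
      exact (ZMod.natCast_rightInverse _).symm
  · push_neg at hpk   -- 2 * k < p
    set J : Finset ℤ := Finset.Icc (-(k:ℤ)) k with hJ
    have hJcard : (J.card : ℝ) = 2 * k + 1 := by
      rw [hJ, Int.card_Icc]
      have : ((k:ℤ) + 1 - -(k:ℤ)).toNat = 2 * k + 1 := by omega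
      rw [this]
      push_cast
      ring
    set A : ZMod p → ℂ := fun a => ∑ j ∈ J, Ee p (a * (j : ZMod p)) with hA
    set T : ZMod p → ℂ := fun a => ∑ t : ZMod p, Ee p (a * (-(f.eval t))) with hT
    set D : ℂ := ∑ t : ZMod p, ∑ j1 ∈ J, ∑ j2 ∈ J,
      (if f.eval t = ((j1 - j2 : ℤ) : ZMod p) then (p:ℂ) else 0) with hD
    -- Step 1 : D = ∑ a, A a * conj (A a) * T a
    have step1 : D = ∑ a : ZMod p, A a * (starRingEnd ℂ) (A a) * T a := by
      have expand : ∀ (t : ZMod p) (j1 j2 : ℤ),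
          (if f.eval t = ((j1 - j2 : ℤ) : ZMod p) then (p:ℂ) else 0)
          = ∑ a : ZMod p, Ee p (a * (j1 : ZMod p)) * Ee p (a * (-(j2 : ZMod p)))
              * Ee p (a * (-(f.eval t))) := by
        intro t j1 j2
        have : ∀ a : ZMod p, Ee p (a * (j1 : ZMod p)) * Ee p (a * (-(j2 : ZMod p)))
            * Ee p (a * (-(f.eval t)))
            = Ee p (a * (((j1 : ZMod p) - (j2 : ZMod p)) - f.eval t)) := by
          intro a
          rw [show a * (((j1 : ZMod p) - (j2 : ZMod p)) - f.eval t)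
              = (a * (j1 : ZMod p) + a * (-(j2 : ZMod p))) + a * (-(f.eval t)) by ring,
            Ee_add, Ee_add]
        simp_rw [this]
        rw [Ee_orth]
        have hcond : (((j1 : ZMod p) - (j2 : ZMod p)) - f.eval t = 0)
            ↔ (f.eval t = ((j1 - j2 : ℤ) : ZMod p)) := by
          rw [sub_eq_zero]
          push_cast
          exact eq_comm
        by_cases hc : f.eval t = ((j1 - j2 : ℤ) : ZMod p)
        · rw [if_pos hc, if_pos (hcond.mpr hc)]
        · rw [if_neg hc, if_neg (fun h => hc (hcond.mp h))]
      have hconj : ∀ a : ZMod p, (starRingEnd ℂ) (A a) = ∑ j ∈ J, Ee p (a * (-(j : ZMod p))) := by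
        intro a
        rw [hA]
        simp only [map_sum]
        apply Finset.sum_congr rfl
        intro j _
        rw [mul_neg, ← Ee_conj]
      rw [hD]
      simp_rw [expand]
      rw [Finset.sum_congr rfl (fun a _ => by rw [hconj a] :
        ∀ a ∈ (Finset.univ : Finset (ZMod p)), A a * (starRingEnd ℂ) (A a) * T a
          = A a * (∑ j ∈ J, Ee p (a * (-(j : ZMod p)))) * T a)]
      simp only [hA, hT, Finset.sum_mul, Finset.mul_sum]
      calc ∑ t : ZMod p, ∑ j1 ∈ J, ∑ j2 ∈ J, ∑ a : ZMod p,
              Ee p (a * (j1:ZMod p)) * Ee p (a * -(j2:ZMod p)) * Ee p (a * -(f.eval t))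
          = ∑ t : ZMod p, ∑ j1 ∈ J, ∑ a : ZMod p, ∑ j2 ∈ J,
              Ee p (a * (j1:ZMod p)) * Ee p (a * -(j2:ZMod p)) * Ee p (a * -(f.eval t)) :=
            Finset.sum_congr rfl (fun t _ => Finset.sum_congr rfl (fun j1 _ =>
              Finset.sum_comm))
        _ = ∑ t : ZMod p, ∑ a : ZMod p, ∑ j1 ∈ J, ∑ j2 ∈ J,
              Ee p (a * (j1:ZMod p)) * Ee p (a * -(j2:ZMod p)) * Ee p (a * -(f.eval t)) :=
            Finset.sum_congr rfl (fun t _ => Finset.sum_comm)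
        _ = ∑ a : ZMod p, ∑ t : ZMod p, ∑ j1 ∈ J, ∑ j2 ∈ J,
              Ee p (a * (j1:ZMod p)) * Ee p (a * -(j2:ZMod p)) * Ee p (a * -(f.eval t)) :=
            Finset.sum_comm
        _ = ∑ a : ZMod p, ∑ t : ZMod p, ∑ j2 ∈ J, ∑ j1 ∈ J,
              Ee p (a * (j1:ZMod p)) * Ee p (a * -(j2:ZMod p)) * Ee p (a * -(f.eval t)) :=
            Finset.sum_congr rfl (fun a _ => Finset.sum_congr rfl (fun t _ =>
              Finset.sum_comm))
    -- Parseval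
    have parseval : ∑ a : ZMod p, (Complex.normSq (A a) : ℝ) = (p:ℝ) * J.card := by
      have hcomplex : ∑ a : ZMod p, ((Complex.normSq (A a) : ℝ) : ℂ) = (p:ℂ) * (J.card:ℂ) := by
        simp_rw [← Complex.mul_conj]
        have hconj : ∀ a : ZMod p, (starRingEnd ℂ) (A a) = ∑ j ∈ J, Ee p (a * (-(j : ZMod p))) := by
          intro a
          rw [hA]
          simp only [map_sum]
          exact Finset.sum_congr rfl (fun j _ => by rw [mul_neg, ← Ee_conj])
        calc ∑ a : ZMod p, A a * (starRingEnd ℂ) (A a)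
            = ∑ a : ZMod p, ∑ j1 ∈ J, ∑ j2 ∈ J,
                Ee p (a * (((j1:ZMod p)) + (-(j2:ZMod p)))) := by
              apply Finset.sum_congr rfl
              intro a _
              rw [hconj a, hA]
              simp only [Finset.sum_mul_sum]
              apply Finset.sum_congr rfl
              intro j1 _
              apply Finset.sum_congr rfl
              intro j2 _
              rw [mul_add, Ee_add]
          _ = ∑ j1 ∈ J, ∑ j2 ∈ J, ∑ a : ZMod p,
                Ee p (a * (((j1:ZMod p)) + (-(j2:ZMod p)))) := by
              rw [Finset.sum_comm]
              exact Finset.sum_congr rfl (fun j1 _ => Finset.sum_comm)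
          _ = ∑ j1 ∈ J, ∑ j2 ∈ J,
                (if ((j1:ZMod p)) + (-(j2:ZMod p)) = 0 then (p:ℂ) else 0) := by
              exact Finset.sum_congr rfl (fun j1 _ => Finset.sum_congr rfl
                (fun j2 _ => by
                  have := Ee_orth p (((j1:ZMod p)) + (-(j2:ZMod p)))
                  simp_rw [this]))
          _ = ∑ j1 ∈ J, (p:ℂ) := by
              apply Finset.sum_congr rfl
              intro j1 hj1
              have hcond : ∀ j2 ∈ J, (((j1:ZMod p)) + (-(j2:ZMod p)) = 0) ↔ (j2 = j1) := by
                intro j2 hj2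
                constructor
                · intro hz
                  have hcast : ((j1 - j2 : ℤ) : ZMod p) = 0 := by
                    push_cast
                    rw [sub_eq_add_neg]
                    exact hz
                  have hdvd : (p:ℤ) ∣ (j1 - j2) :=
                    (ZMod.intCast_zmod_eq_zero_iff_dvd _ p).mp hcast
                  have h1 := Finset.mem_Icc.mp hj1
                  have h2 := Finset.mem_Icc.mp hj2
                  have hklt : 2 * (k:ℤ) < p := by exact_mod_cast hpk
                  have : j1 - j2 = 0 := Int.eq_zero_of_abs_lt_dvd hdvd (by
                    rw [abs_lt]
                    constructor <;> linarith [h1.1, h1.2, h2.1, h2.2])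
                  omega
                · intro h
                  subst h
                  ring
              rw [Finset.sum_congr rfl (fun j2 hj2 => if_congr (hcond j2 hj2) rfl rfl)]
              rw [Finset.sum_ite_eq' J j1 (fun _ => (p:ℂ))]
              rw [if_pos hj1]
          _ = (p:ℂ) * (J.card : ℂ) := by
              rw [Finset.sum_const, nsmul_eq_mul, mul_comm]
      exact_mod_cast hcomplex
    -- bound on T
    have hTabs : ∀ a : ZMod p, a ≠ 0 → ‖T a‖ ≤ M := by
      intro a ha
      have : T a = ∑ t : ZMod p, Ee p ((-a) * f.eval t) := by
        rw [hT]
        exact Finset.sum_congr rfl (fun t _ => by rw [neg_mul, mul_neg])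
      rw [this]
      exact hF (-a) (neg_ne_zero.mpr ha)
    -- lower-bound the real part of D
    have hD_re : (J.card : ℝ) ^ 2 * p - M * ((p:ℝ) * J.card) ≤ D.re := by
      rw [step1, ← Finset.add_sum_erase Finset.univ _ (Finset.mem_univ (0 : ZMod p))]
      have hA0 : A 0 = (J.card : ℂ) := by
        rw [hA]
        simp [Ee_zero]
      have hT0 : T 0 = (p : ℂ) := by
        rw [hT]
        simp [Ee_zero, ZMod.card]
      have hG0 : (A 0 * (starRingEnd ℂ) (A 0) * T 0).re = (J.card : ℝ) ^ 2 * p := by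
        rw [hA0, hT0]
        have : ((J.card : ℂ)) * (starRingEnd ℂ) ((J.card : ℂ)) * (p:ℂ)
            = (((J.card : ℝ)^2 * p : ℝ) : ℂ) := by
          rw [Complex.conj_natCast]
          push_cast
          ring
        rw [this, Complex.ofReal_re]
      rw [Complex.add_re, hG0]
      have hrest : -(M * ((p:ℝ) * J.card))
          ≤ (∑ a ∈ Finset.univ.erase (0 : ZMod p), A a * (starRingEnd ℂ) (A a) * T a).re := by
        rw [Complex.re_sum]
        have hterm : ∀ a ∈ Finset.univ.erase (0 : ZMod p),
            -(M * Complex.normSq (A a)) ≤ (A a * (starRingEnd ℂ) (A a) * T a).re := by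
          intro a ha
          have ha0 : a ≠ 0 := Finset.ne_of_mem_erase ha
          rw [Complex.mul_conj]
          have hre : ((Complex.normSq (A a) : ℂ) * T a).re
              = Complex.normSq (A a) * (T a).re := by
            simp [Complex.mul_re]
          rw [hre]
          have h1 : -M ≤ (T a).re := by
            have := Complex.abs_re_le_norm (T a)
            have h2 := hTabs a ha0
            rw [abs_le] at this
            linarith [this.1]
          have h2 : 0 ≤ Complex.normSq (A a) := Complex.normSq_nonneg _
          nlinarith
        calc -(M * ((p:ℝ) * J.card))
            = -(M * ∑ a : ZMod p, Complex.normSq (A a)) := by rw [parseval]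
          _ ≤ -(M * ∑ a ∈ Finset.univ.erase (0 : ZMod p), Complex.normSq (A a)) := by
              have hsub : ∑ a ∈ Finset.univ.erase (0 : ZMod p), Complex.normSq (A a)
                  ≤ ∑ a : ZMod p, Complex.normSq (A a) :=
                Finset.sum_le_sum_of_subset_of_nonneg (Finset.erase_subset _ _)
                  (fun i _ _ => Complex.normSq_nonneg _)
              nlinarith
          _ = ∑ a ∈ Finset.univ.erase (0 : ZMod p), -(M * Complex.normSq (A a)) := by
              rw [Finset.mul_sum, ← Finset.sum_neg_distrib]
          _ ≤ ∑ a ∈ Finset.univ.erase (0 : ZMod p), (A a * (starRingEnd ℂ) (A a) * T a).re :=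
              Finset.sum_le_sum hterm
      linarith
    -- conclude
    have hp0 : (0:ℝ) < p := by exact_mod_cast hp.out.pos
    have hJpos : (0:ℝ) < (J.card : ℝ) := by rw [hJcard]; positivity
    have hMlt : M < (J.card : ℝ) := by rw [hJcard]; exact hk
    have hDpos : 0 < D.re := by
      nlinarith [hD_re, mul_pos (mul_pos hp0 hJpos) (sub_pos.mpr hMlt)]
    have hDne : D ≠ 0 := by
      intro h
      rw [h] at hDpos
      simp at hDpos
    rw [hD] at hDne
    obtain ⟨t, _, ht⟩ := Finset.exists_ne_zero_of_sum_ne_zero hDne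
    obtain ⟨j1, hj1, hne1⟩ := Finset.exists_ne_zero_of_sum_ne_zero ht
    obtain ⟨j2, hj2, hne2⟩ := Finset.exists_ne_zero_of_sum_ne_zero hne1
    have hcond : f.eval t = ((j1 - j2 : ℤ) : ZMod p) := by
      by_contra hcon
      rw [if_neg hcon] at hne2
      exact hne2 rfl
    refine ⟨j1 - j2, ?_, t, hcond⟩
    have h1 := Finset.mem_Icc.mp hj1
    have h2 := Finset.mem_Icc.mp hj2
    rw [abs_le]
    constructor <;> omega




lemma hat_eq (p : ℕ) [hp : Fact p.Prime] (f : Polynomial (ZMod p)) (r : ℕ) (hr : r < p) :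
    ∑ x ∈ Finset.range p,
      (((Finset.range p).filter (fun t : ℕ => f.eval (t : ZMod p) = (x : ZMod p))).card : ℂ) *
        Complex.exp (-2 * Real.pi * Complex.I * r * x / p)
    = ∑ u : ZMod p, Ee p ((-(r : ZMod p)) * f.eval u) := by
  have step1 : ∀ x ∈ Finset.range p,
      (((Finset.range p).filter (fun t : ℕ => f.eval (t : ZMod p) = (x : ZMod p))).card : ℂ) *
        Complex.exp (-2 * Real.pi * Complex.I * r * x / p)
      = ∑ t ∈ (Finset.range p).filter (fun t : ℕ => ((f.eval (t : ZMod p)).val = x)),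
          Complex.exp (-2 * Real.pi * Complex.I * r * ((f.eval (t : ZMod p)).val : ℂ) / p) := by
    intro x hx
    have hxlt : x < p := Finset.mem_range.mp hx
    have hfe : (Finset.range p).filter (fun t : ℕ => f.eval (t : ZMod p) = (x : ZMod p))
        = (Finset.range p).filter (fun t : ℕ => ((f.eval (t : ZMod p)).val = x)) := by
      apply Finset.filter_congr
      intro t _
      constructor
      · intro h
        rw [h, ZMod.val_cast_of_lt hxlt]
      · intro h
        rw [← h]
        exact (ZMod.natCast_rightInverse _).symm
    rw [hfe]
    have h2 : ∑ t ∈ (Finset.range p).filter (fun t : ℕ => ((f.eval (t : ZMod p)).val = x)),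
          Complex.exp (-2 * Real.pi * Complex.I * r * ((f.eval (t : ZMod p)).val : ℂ) / p)
        = ∑ _t ∈ (Finset.range p).filter (fun t : ℕ => ((f.eval (t : ZMod p)).val = x)),
          Complex.exp (-2 * Real.pi * Complex.I * r * (x : ℂ) / p) := by
      apply Finset.sum_congr rfl
      intro t ht
      rw [(Finset.mem_filter.mp ht).2]
    rw [h2, Finset.sum_const, nsmul_eq_mul]
  rw [Finset.sum_congr rfl step1]
  rw [Finset.sum_fiberwise_of_maps_to (g := fun t : ℕ => (f.eval (t : ZMod p)).val)
    (fun t _ht => Finset.mem_range.mpr (ZMod.val_lt (f.eval (t : ZMod p))))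
    (fun t : ℕ => Complex.exp (-2 * Real.pi * Complex.I * r * ((f.eval ((t : ℕ) : ZMod p)).val : ℂ) / p))]
  rw [sum_range_eq_sum_zmod p
    (fun u => Complex.exp (-2 * Real.pi * Complex.I * r * ((f.eval u).val : ℂ) / p))]
  apply Finset.sum_congr rfl
  intro u _
  have hcast : (-(r : ZMod p)) * f.eval u
      = (((-(r:ℤ)) * ((f.eval u).val : ℤ) : ℤ) : ZMod p) := by
    push_cast
    congr 1
    exact (ZMod.natCast_rightInverse _).symm
  rw [hcast, Ee_intCast]
  congr 1
  push_cast
  ring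

theorem stmt_9 (d : ℕ) :
    (∃ C : ℝ, 0 < C ∧ ∀ (p : ℕ), p.Prime → ∀ f : Polynomial (ZMod p), f.natDegree ≤ d →
      (∀ r : ℕ, r < p → r ≠ 0 →
        ‖∑ x ∈ Finset.range p,
          (((Finset.range p).filter (fun t : ℕ => f.eval (t : ZMod p) = (x : ZMod p))).card : ℂ) *
            Complex.exp (-2 * Real.pi * Complex.I * r * x / p)‖
          ≤ C * (p : ℝ) ^ ((1 : ℝ) - 2 ^ (-(d : ℝ)))) →
      ∀ k : ℕ, C * (p : ℝ) ^ ((1 : ℝ) - 2 ^ (-(d : ℝ))) < 2 * k + 1 →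
        ∃ m : ℤ, |m| ≤ 2 * k ∧ ∃ t : ZMod p, f.eval t = (m : ZMod p))
    ∧
    ((∀ ε : ℝ, 0 < ε → ∃ Cw : ℝ, 0 < Cw ∧ ∀ (p : ℕ), p.Prime →
        ∀ g : Polynomial (ZMod p), g.natDegree = d →
          ‖∑ x ∈ Finset.range p,
            Complex.exp (2 * Real.pi * Complex.I * ((g.eval (x : ZMod p)).val : ℂ) / p)‖
            ≤ Cw * (p : ℝ) ^ (1 + ε - 2 ^ (1 - (d : ℝ)))) →
      ∃ Cd : ℝ, 0 < Cd ∧ ∀ (p : ℕ), p.Prime → ∀ f : Polynomial (ZMod p),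
        f.natDegree ≤ d → (∃ i : ℕ, 1 ≤ i ∧ f.coeff i ≠ 0) →
        ∃ m : ℤ, (|m| : ℝ) ≤ Cd * (p : ℝ) ^ ((1 : ℝ) - 2 ^ (-(d : ℝ))) ∧
          ∃ t : ZMod p, f.eval t = (m : ZMod p)) := by
  constructor
  · refine ⟨1, one_pos, ?_⟩
    intro p hp f _hfd hhat k hk
    haveI : Fact p.Prime := ⟨hp⟩
    set M : ℝ := 1 * (p:ℝ) ^ ((1 : ℝ) - 2 ^ (-(d : ℝ))) with hMdef
    have hM0 : 0 ≤ M := by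
      rw [hMdef]
      positivity
    apply key_lemma p f M hM0 ?_ k hk
    intro a ha
    set r : ℕ := (-a).val with hrdef
    have hrp : r < p := ZMod.val_lt _
    have hrcast : (r : ZMod p) = -a := ZMod.natCast_rightInverse _
    have hrne : r ≠ 0 := by
      intro h0
      apply ha
      have h1 : ((r : ℕ) : ZMod p) = 0 := by rw [h0]; simp
      rw [hrcast] at h1
      simpa using h1
    have hb := hhat r hrp hrne
    rw [hat_eq p f r hrp] at hb
    have haa : -((r : ℕ) : ZMod p) = a := by rw [hrcast]; simp
    rwa [haa] at hb
  · intro _Whyp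
    refine ⟨(d:ℝ) + 7, by positivity, ?_⟩
    intro p hp f hfd hex
    haveI : Fact p.Prime := ⟨hp⟩
    have hp1 : (1:ℝ) ≤ p := by exact_mod_cast hp.one_lt.le
    set γ : ℝ := (1:ℝ) - 2 ^ (-(d:ℝ)) with hγ
    have hγ0 : 0 ≤ γ := by
      rw [hγ, sub_nonneg]
      apply Real.rpow_le_one_of_one_le_of_nonpos (by norm_num)
      simp
    have hpγ1 : (1:ℝ) ≤ (p:ℝ) ^ γ := by
      rw [show (1:ℝ) = (p:ℝ) ^ (0:ℝ) by rw [Real.rpow_zero]]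
      exact Real.rpow_le_rpow_of_exponent_le hp1 hγ0
    obtain ⟨i, hi1, hic⟩ := hex
    have he1 : 1 ≤ f.natDegree := le_trans hi1 (Polynomial.le_natDegree_of_ne_zero hic)
    by_cases hdp : p ≤ d
    · refine ⟨((f.eval 0).val : ℤ), ?_, 0, ?_⟩
      · rw [abs_of_nonneg (by positivity : (0:ℝ) ≤ ((((f.eval 0).val : ℤ)):ℝ))]
        have hv : ((f.eval 0).val : ℝ) < p := by exact_mod_cast ZMod.val_lt _
        have hpd : (p:ℝ) ≤ d := by exact_mod_cast hdp
        have h1 : ((((f.eval 0).val : ℤ)):ℝ) ≤ (d:ℝ) + 7 := by push_cast; linarith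
        calc ((((f.eval 0).val : ℤ)):ℝ) ≤ ((d:ℝ) + 7) * 1 := by linarith
          _ ≤ ((d:ℝ) + 7) * (p:ℝ) ^ γ := by
              have hd0 : (0:ℝ) ≤ (d:ℝ) + 7 := by positivity
              nlinarith
      · push_cast
        exact (ZMod.natCast_rightInverse _).symm
    · push_neg at hdp
      set M : ℝ := 2 * (p:ℝ) ^ γ with hMdef
      have hM0 : 0 ≤ M := by rw [hMdef]; positivity
      have hbound : ∀ a : ZMod p, a ≠ 0 →
          ‖∑ t : ZMod p, Ee p (a * f.eval t)‖ ≤ M := by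
        intro a ha
        have hgd : (Polynomial.C a * f).natDegree = f.natDegree :=
          Polynomial.natDegree_C_mul ha
        have h1 := weyl_bound p f.natDegree he1 (Polynomial.C a * f) hgd (by omega)
        have heval : ∀ x : ZMod p, (Polynomial.C a * f).eval x = a * f.eval x := by
          intro x; simp
        simp_rw [heval] at h1
        have hexp : (p:ℝ) ^ ((1:ℝ) - 2 ^ (1 - (f.natDegree:ℝ))) ≤ (p:ℝ) ^ γ := by
          apply Real.rpow_le_rpow_of_exponent_le hp1
          rw [hγ]
          have h2 : (2:ℝ) ^ (-(d:ℝ)) ≤ 2 ^ (1 - (f.natDegree:ℝ)) := by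
            apply Real.rpow_le_rpow_of_exponent_le (by norm_num)
            have : (f.natDegree:ℝ) ≤ d := by exact_mod_cast hfd
            linarith
          linarith
        rw [hMdef]
        linarith
      set k : ℕ := ⌈M⌉₊ with hkdef
      have hkM : M < 2 * (k:ℝ) + 1 := by
        have h1 := Nat.le_ceil M
        have h2 : (0:ℝ) ≤ (k:ℝ) := by positivity
        rw [hkdef] at *
        linarith
      obtain ⟨m, hm, t, ht⟩ := key_lemma p f M hM0 hbound k hkM
      refine ⟨m, ?_, t, ht⟩
      rw [← Int.cast_abs]
      have h2k : (k:ℝ) < M + 1 := Nat.ceil_lt_add_one hM0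
      have habs : ((|m|:ℤ):ℝ) ≤ 2 * (k:ℝ) := by exact_mod_cast hm
      have hd0 : (0:ℝ) ≤ (d:ℝ) := Nat.cast_nonneg d
      calc ((|m|:ℤ):ℝ) ≤ 2 * (k:ℝ) := habs
        _ ≤ 2 * M + 2 := by linarith
        _ = 4 * (p:ℝ) ^ γ + 2 := by rw [hMdef]; ring
        _ ≤ 6 * (p:ℝ) ^ γ := by linarith
        _ ≤ ((d:ℝ) + 7) * (p:ℝ) ^ γ := by nlinarith
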